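/- Let E be a real normed vector space, f : E → ℝ a differentiable function, and Z : E → E a boundary-gradient-like vector field for f (i.e. Df(p)(Z p) ≥ 0 for all p ∈ E, and Df(p)(Z p) > 0 whenever f(p) = 0). Define F : E × ℝ → ℝ by F(p,s) = s² + f(p). Then F is differentiable and for every (p,s) ∈ E × ℝ the Fréchet derivative of F at (p,s) applied to the vector (Z p, s) equals 2s² + Df(p)(Z p); this quantity is ≥ 0 for every (p,s), and it is strictly positive whenever F(p,s) = 0. In particular DF(p,s) ≠ 0 at every point of F⁻¹(0), i.e. 0 is a regular value of F, so the double {(p,s) ∈ E × ℝ : s² + f(p) = 0} is a regular level set, and the vector field (p,s) ↦ (Z p, s) is boundary-gradient-like for F. -/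

import Mathlib

lemma key {E : Type*} [NormedAddCommGroup E] [NormedSpace ℝ E]
    (f : E → ℝ) (hf : Differentiable ℝ f) (p : E) (s : ℝ) :
    HasFDerivAt (fun x : E × ℝ => x.2 ^ 2 + f x.1)
      (((s • (ContinuousLinearMap.snd ℝ E ℝ)) + (s • (ContinuousLinearMap.snd ℝ E ℝ))) +
        ((fderiv ℝ f p).comp (ContinuousLinearMap.fst ℝ E ℝ))) (p, s) := by
  have h1 := HasFDerivAt.mul (𝕜 := ℝ)
    (hasFDerivAt_snd (p := ((p, s) : E × ℝ))) (hasFDerivAt_snd (p := ((p, s) : E × ℝ)))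
  have := h1.add ((hf p).hasFDerivAt.comp (p, s) hasFDerivAt_fst)
  simp only [pow_two]
  exact this

/-- If `Z` is boundary-gradient-like for a differentiable `f : E → ℝ`, then
`F (p,s) = s^2 + f p` is differentiable, `DF(p,s)(Z p, s) = 2 s^2 + Df(p)(Z p)`, this quantity
is nonnegative everywhere and positive on `F⁻¹(0)`; in particular `DF ≠ 0` on `F⁻¹(0)`, i.e.
`0` is a regular value of `F`, and `(p,s) ↦ (Z p, s)` is boundary-gradient-like for `F`. -/
theorem stmt_0 {E : Type*} [NormedAddCommGroup E] [NormedSpace ℝ E]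
    (f : E → ℝ) (Z : E → E)
    (hf : Differentiable ℝ f)
    (hZnonneg : ∀ p : E, 0 ≤ fderiv ℝ f p (Z p))
    (hZpos : ∀ p : E, f p = 0 → 0 < fderiv ℝ f p (Z p)) :
    Differentiable ℝ (fun x : E × ℝ => x.2 ^ 2 + f x.1) ∧
    (∀ (p : E) (s : ℝ),
      fderiv ℝ (fun x : E × ℝ => x.2 ^ 2 + f x.1) (p, s) (Z p, s)
        = 2 * s ^ 2 + fderiv ℝ f p (Z p)) ∧
    (∀ (p : E) (s : ℝ), 0 ≤ 2 * s ^ 2 + fderiv ℝ f p (Z p)) ∧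
    (∀ (p : E) (s : ℝ), s ^ 2 + f p = 0 → 0 < 2 * s ^ 2 + fderiv ℝ f p (Z p)) ∧
    (∀ (p : E) (s : ℝ), s ^ 2 + f p = 0 →
      fderiv ℝ (fun x : E × ℝ => x.2 ^ 2 + f x.1) (p, s) ≠ 0) := by
  have hderiv : ∀ (p : E) (s : ℝ),
      fderiv ℝ (fun x : E × ℝ => x.2 ^ 2 + f x.1) (p, s) (Z p, s)
        = 2 * s ^ 2 + fderiv ℝ f p (Z p) := by
    intro p s
    rw [(key f hf p s).fderiv]
    simp
    ring
  have hpos : ∀ (p : E) (s : ℝ), s ^ 2 + f p = 0 →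
      0 < 2 * s ^ 2 + fderiv ℝ f p (Z p) := by
    intro p s h
    rcases eq_or_ne s 0 with hs | hs
    · have : f p = 0 := by simpa [hs] using h
      have := hZpos p this
      nlinarith
    · have : 0 < s ^ 2 := by positivity
      have := hZnonneg p
      nlinarith
  refine ⟨fun x => ((key f hf x.1 x.2).differentiableAt), hderiv,
    fun p s => by nlinarith [hZnonneg p, sq_nonneg s], hpos, ?_⟩
  intro p s h hzero
  have := hderiv p s
  rw [hzero] at this
  simp at this
  have := hpos p s h
  linarith
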